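/- Let Φ : M_n(ℂ) → M_2(ℂ) be a trace-preserving linear map whose Choi matrix J(Φ) = Σ_{i,j=1}^n E_{ij} ⊗ Φ(E_{ij}) is doubly nonnegative (positive semidefinite with all entries real and nonnegative). Then J(Φ) is completely positive, i.e., J(Φ) = Σ_{t=1}^s x_t x_tᵀ for some entrywise nonnegative vectors x_t ∈ ℝ^{2n}. -/

import Mathlib

open Matrix
open scoped ComplexOrder

/-- A complex matrix is completely positive if it is a finite sum of rank-one
matrices `x xᵀ` with `x` a real entrywise nonnegative vector (viewed in `ℂ`). -/
def IsCPMat {ι : Type*} [Fintype ι] (A : Matrix ι ι ℂ) : Prop :=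
  ∃ (s : ℕ) (x : Fin s → ι → ℝ), (∀ t i, 0 ≤ x t i) ∧
    ∀ i j, A i j = ((∑ t, x t i * x t j : ℝ) : ℂ)

/-- A complex matrix is doubly nonnegative if it is positive semidefinite and
every entry is a nonnegative real number. -/
def IsDNNMat {ι : Type*} [Fintype ι] (A : Matrix ι ι ℂ) : Prop :=
  A.PosSemidef ∧ ∀ i j, 0 ≤ (A i j).re ∧ (A i j).im = 0

/-- The map `id_k ⊗ Φ` acting blockwise: the `((a,p),(b,q))` entry of the output
is `Φ(X_{ab})_{pq}`, where `X_{ab}` is the `(a,b)` block of `X`. -/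
def idTensor {n m : ℕ} (Φ : Matrix (Fin n) (Fin n) ℂ →ₗ[ℂ] Matrix (Fin m) (Fin m) ℂ)
    (k : ℕ) (X : Matrix (Fin k × Fin n) (Fin k × Fin n) ℂ) :
    Matrix (Fin k × Fin m) (Fin k × Fin m) ℂ :=
  Matrix.of fun ap bq => Φ (Matrix.of fun i j => X (ap.1, i) (bq.1, j)) ap.2 bq.2

/-- `Φ` is completely positive as a linear map between matrix algebras. -/
def IsCPMap {n m : ℕ} (Φ : Matrix (Fin n) (Fin n) ℂ →ₗ[ℂ] Matrix (Fin m) (Fin m) ℂ) : Prop :=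
  ∀ (k : ℕ) (X : Matrix (Fin k × Fin n) (Fin k × Fin n) ℂ),
    X.PosSemidef → (idTensor Φ k X).PosSemidef

/-- `Φ` is trace-preserving. -/
def IsTP {n m : ℕ} (Φ : Matrix (Fin n) (Fin n) ℂ →ₗ[ℂ] Matrix (Fin m) (Fin m) ℂ) : Prop :=
  ∀ X, (Φ X).trace = X.trace

/-- `Φ` is CPCP: `id_k ⊗ Φ` maps completely positive matrices to completely
positive matrices for every `k`. -/
def IsCPCP {n m : ℕ} (Φ : Matrix (Fin n) (Fin n) ℂ →ₗ[ℂ] Matrix (Fin m) (Fin m) ℂ) : Prop :=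
  ∀ (k : ℕ) (X : Matrix (Fin k × Fin n) (Fin k × Fin n) ℂ),
    IsCPMat X → IsCPMat (idTensor Φ k X)

/-- `Φ` is CPDNN: `id_k ⊗ Φ` maps doubly nonnegative matrices to doubly
nonnegative matrices for every `k`. -/
def IsCPDNN {n m : ℕ} (Φ : Matrix (Fin n) (Fin n) ℂ →ₗ[ℂ] Matrix (Fin m) (Fin m) ℂ) : Prop :=
  ∀ (k : ℕ) (X : Matrix (Fin k × Fin n) (Fin k × Fin n) ℂ),
    IsDNNMat X → IsDNNMat (idTensor Φ k X)

/-- The Choi matrix `J(Φ) = Σ_{i,j} E_{ij} ⊗ Φ(E_{ij})`, with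
`((i,p),(j,q))` entry equal to `Φ(E_{ij})_{pq}`. -/
def choi {n m : ℕ} (Φ : Matrix (Fin n) (Fin n) ℂ →ₗ[ℂ] Matrix (Fin m) (Fin m) ℂ) :
    Matrix (Fin n × Fin m) (Fin n × Fin m) ℂ :=
  Matrix.of fun ip jq => Φ (Matrix.single ip.1 jq.1 1) ip.2 jq.2

section AuxCP


theorem smul_one_sub_psd {ι : Type} [Fintype ι] [DecidableEq ι]
    (S : Matrix ι ι ℝ) (h : S.IsHermitian) (ρ : ℝ)
    (hρ : ∀ i, h.eigenvalues i ≤ ρ) : (ρ • (1 : Matrix ι ι ℝ) - S).PosSemidef := by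
  have hd : Matrix.PosSemidef (Matrix.diagonal (fun i => ρ - h.eigenvalues i)) :=
    Matrix.PosSemidef.diagonal (fun i => by simpa using hρ i)
  have h2 := hd.mul_mul_conjTranspose_same (h.eigenvectorUnitary : Matrix ι ι ℝ)
  have heq : (h.eigenvectorUnitary : Matrix ι ι ℝ) * (Matrix.diagonal (fun i => ρ - h.eigenvalues i)) * (h.eigenvectorUnitary : Matrix ι ι ℝ)ᴴ = ρ • (1 : Matrix ι ι ℝ) - S := by
    have hdd : Matrix.diagonal (fun i => ρ - h.eigenvalues i) = ρ • (1 : Matrix ι ι ℝ) - Matrix.diagonal (RCLike.ofReal ∘ h.eigenvalues) := by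
      ext i j
      by_cases hij : i = j <;>
        simp [Matrix.diagonal_apply, Matrix.one_apply, hij, Matrix.sub_apply]
    rw [hdd, Matrix.mul_sub, Matrix.sub_mul, Matrix.mul_smul, Matrix.smul_mul, mul_one,
      ← Matrix.star_eq_conjTranspose]
    rw [Unitary.mul_star_self_of_mem (h.eigenvectorUnitary).2]
    conv_rhs => rw [h.spectral_theorem, Unitary.conjStarAlgAut_apply]
  rwa [heq] at h2

theorem psd_diag_nonneg {ι : Type} [Fintype ι] [DecidableEq ι]
    {M : Matrix ι ι ℝ} (hM : M.PosSemidef) (i : ι) : 0 ≤ M i i := by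
  have := hM.dotProduct_mulVec_nonneg (Pi.single i 1)
  simpa [dotProduct, mulVec, Pi.single_apply, Finset.sum_ite_eq', Finset.sum_ite_eq] using this

theorem core_perron : ∀ (N : ℕ) (ι : Type) [Fintype ι] [DecidableEq ι],
    Fintype.card ι ≤ N → ∀ S : Matrix ι ι ℝ, S.IsHermitian → (∀ i j, 0 ≤ S i j) →
    ((1 : Matrix ι ι ℝ) - S).PosSemidef →
    ∃ w : ι → ℝ, (∀ i, 0 < w i) ∧ ∀ i, (S *ᵥ w) i ≤ w i := by
  intro N
  induction N with
  | zero =>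
    intro ι _ _ hcard S _ _ _
    have : IsEmpty ι := by
      rw [← Fintype.card_eq_zero_iff]
      omega
    exact ⟨fun _ => 1, fun i => isEmptyElim i, fun i => isEmptyElim i⟩
  | succ N ih =>
    intro ι _ _ hcard S hH hnn hpsd
    rcases isEmpty_or_nonempty ι with hem | hne
    · exact ⟨fun _ => 1, fun i => isEmptyElim i, fun i => isEmptyElim i⟩
    -- maximal eigenvalue
    obtain ⟨i₀, -, hmax⟩ := Finset.exists_max_image Finset.univ hH.eigenvalues
      Finset.univ_nonempty
    set ρ := hH.eigenvalues i₀ with hρdef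
    have hmax' : ∀ i, hH.eigenvalues i ≤ ρ := fun i => hmax i (Finset.mem_univ i)
    set v : ι → ℝ := ⇑(hH.eigenvectorBasis i₀) with hvdef
    have hEig : S *ᵥ v = ρ • v := hH.mulVec_eigenvectorBasis i₀
    have hvne : ∃ k, v k ≠ 0 := by
      by_contra hc
      push_neg at hc
      have : hH.eigenvectorBasis i₀ = 0 := by
        apply PiLp.ext
        intro k
        exact hc k
      exact hH.eigenvectorBasis.orthonormal.ne_zero i₀ this
    have hpsdρ : (ρ • (1 : Matrix ι ι ℝ) - S).PosSemidef := smul_one_sub_psd S hH ρ hmax'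
    have hρ0 : 0 ≤ ρ := by
      obtain ⟨i⟩ := hne
      have h1 := psd_diag_nonneg hpsdρ i
      have h2 := hnn i i
      simp only [Matrix.sub_apply, Matrix.smul_apply, Matrix.one_apply_eq, smul_eq_mul,
        mul_one] at h1
      linarith
    have hvv : 0 < v ⬝ᵥ v := by
      obtain ⟨kp, hkp⟩ := hvne
      rw [dotProduct]
      apply Finset.sum_pos' (fun k _ => mul_self_nonneg (v k))
      exact ⟨kp, Finset.mem_univ kp, mul_self_pos.mpr hkp⟩
    have hρ1 : ρ ≤ 1 := by
      have h1 := hpsd.dotProduct_mulVec_nonneg v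
      simp only [star_trivial, Matrix.sub_mulVec, Matrix.one_mulVec, dotProduct_sub] at h1
      rw [hEig, dotProduct_smul] at h1
      simp only [smul_eq_mul] at h1
      nlinarith [hvv, h1]
    set w₀ : ι → ℝ := fun k => |v k| with hw₀def
    have hw₀nn : ∀ k, 0 ≤ w₀ k := fun k => abs_nonneg _
    have hge : ∀ i, ρ * w₀ i ≤ (S *ᵥ w₀) i := by
      intro i
      have : ρ * w₀ i = |(S *ᵥ v) i| := by
        rw [hEig]
        simp only [Pi.smul_apply, smul_eq_mul, abs_mul, abs_of_nonneg hρ0]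
        rfl
      rw [this]
      calc |(S *ᵥ v) i| = |∑ j, S i j * v j| := by rw [mulVec, dotProduct]
        _ ≤ ∑ j, |S i j * v j| := Finset.abs_sum_le_sum_abs _ _
        _ = ∑ j, S i j * w₀ j := by
            apply Finset.sum_congr rfl
            intro j _
            rw [abs_mul, abs_of_nonneg (hnn i j)]
        _ = (S *ᵥ w₀) i := by rw [mulVec, dotProduct]
    -- quadratic form zero at w₀
    have hq : w₀ ⬝ᵥ ((ρ • (1 : Matrix ι ι ℝ) - S) *ᵥ w₀) = 0 := by
      have hle : w₀ ⬝ᵥ ((ρ • (1 : Matrix ι ι ℝ) - S) *ᵥ w₀) ≤ 0 := by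
        rw [Matrix.sub_mulVec, Matrix.smul_mulVec, Matrix.one_mulVec]
        rw [dotProduct_sub]
        have : ∀ i, w₀ i * (ρ * w₀ i) ≤ w₀ i * (S *ᵥ w₀) i := fun i =>
          mul_le_mul_of_nonneg_left (hge i) (hw₀nn i)
        have hsum : w₀ ⬝ᵥ (ρ • w₀) ≤ w₀ ⬝ᵥ (S *ᵥ w₀) := by
          rw [dotProduct, dotProduct]
          apply Finset.sum_le_sum
          intro i _
          simpa using this i
        linarith
      have hge0 := hpsdρ.dotProduct_mulVec_nonneg w₀
      simp only [star_trivial] at hge0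
      linarith
    have hker : (ρ • (1 : Matrix ι ι ℝ) - S) *ᵥ w₀ = 0 := by
      rw [← hpsdρ.dotProduct_mulVec_zero_iff w₀]
      simpa using hq
    have hSw₀ : S *ᵥ w₀ = ρ • w₀ := by
      have := congrFun hker
      funext i
      have h := this i
      simp only [Matrix.sub_mulVec, Matrix.smul_mulVec, Matrix.one_mulVec,
        Pi.sub_apply, Pi.smul_apply, Pi.zero_apply, smul_eq_mul] at h ⊢
      linarith
    by_cases hall : ∀ k, w₀ k ≠ 0
    · refine ⟨w₀, fun k => lt_of_le_of_ne (hw₀nn k) (Ne.symm (hall k)), fun i => ?_⟩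
      rw [hSw₀]
      simp only [Pi.smul_apply, smul_eq_mul]
      have := hw₀nn i
      nlinarith [hρ1, hw₀nn i]
    · -- restrict to the zero set
      push_neg at hall
      obtain ⟨k₀, hk₀⟩ := hall
      obtain ⟨kp, hkp⟩ := hvne
      have hkpw : w₀ kp ≠ 0 := abs_ne_zero.mpr hkp
      -- Z = zero set
      set Z := {k : ι // w₀ k = 0} with hZdef
      have hcardZ : Fintype.card Z < Fintype.card ι := by
        apply Fintype.card_subtype_lt (x := kp)
        simpa using hkpw
      have hSzero : ∀ (z : ι) (j : ι), w₀ z = 0 → w₀ j ≠ 0 → S z j = 0 := by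
        intro z j hz hj
        have h := congrFun hSw₀ z
        simp only [Pi.smul_apply, smul_eq_mul, hz, mul_zero] at h
        -- sum of nonnegatives equals zero
        have hterm : ∀ l ∈ Finset.univ, 0 ≤ S z l * w₀ l := fun l _ =>
          mul_nonneg (hnn z l) (hw₀nn l)
        have hsum0 : ∑ l, S z l * w₀ l = 0 := by
          rw [← h]; rw [mulVec, dotProduct]
        have := (Finset.sum_eq_zero_iff_of_nonneg hterm).mp hsum0 j (Finset.mem_univ j)
        rcases mul_eq_zero.mp this with h' | h'
        · exact h'
        · exact absurd h' hj
      have hsymm : ∀ a b, S a b = S b a := by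
        intro a b
        calc S a b = Sᴴ b a := by simp [conjTranspose_apply]
        _ = S b a := by rw [hH]
      -- apply induction
      have hZcard : Fintype.card Z ≤ N := by omega
      obtain ⟨w', hw'pos, hw'le⟩ := ih Z hZcard (S.submatrix Subtype.val Subtype.val)
        (hH.submatrix Subtype.val)
        (fun a b => hnn a.val b.val)
        (by
          have h1 : (1 : Matrix Z Z ℝ) - S.submatrix Subtype.val Subtype.val
              = ((1 : Matrix ι ι ℝ) - S).submatrix Subtype.val Subtype.val := by
            ext a b
            simp only [Matrix.sub_apply, submatrix_apply]
            rcases eq_or_ne a b with rfl | hab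
            · rw [Matrix.one_apply_eq, Matrix.one_apply_eq]
            · rw [Matrix.one_apply_ne hab,
                Matrix.one_apply_ne (fun hc => hab (Subtype.ext hc))]
          rw [h1]
          exact hpsd.submatrix _)
      -- assemble
      set wfull : ι → ℝ := fun i => if h : w₀ i = 0 then w' ⟨i, h⟩ else w₀ i with hwf
      refine ⟨wfull, ?_, ?_⟩
      · intro i
        by_cases h : w₀ i = 0
        · simp only [hwf, dif_pos h]
          exact hw'pos ⟨i, h⟩
        · simp only [hwf, dif_neg h]
          exact lt_of_le_of_ne (hw₀nn i) (Ne.symm h)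
      · intro i
        have hwfZ : ∀ (z : ι) (hz : w₀ z = 0), wfull z = w' ⟨z, hz⟩ := by
          intro z hz
          simp only [hwf, dif_pos hz]
        have hwfP : ∀ (z : ι), w₀ z ≠ 0 → wfull z = w₀ z := by
          intro z hz
          simp only [hwf, dif_neg hz]
        by_cases h : w₀ i = 0
        · -- row i: only Z entries survive
          have hsub := Finset.sum_subtype_eq_sum_filter
            (s := (Finset.univ : Finset ι)) (fun j => S i j * wfull j)
            (p := fun j => w₀ j = 0)
          have key : (S *ᵥ wfull) i = ∑ z : Z, S i z.val * wfull z.val := by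
            rw [mulVec, dotProduct]
            calc ∑ j, S i j * wfull j
                = ∑ j ∈ Finset.univ.filter (fun j => w₀ j = 0), S i j * wfull j := by
                  rw [Finset.sum_filter]
                  apply Finset.sum_congr rfl
                  intro j _
                  by_cases hj : w₀ j = 0
                  · rw [if_pos hj]
                  · rw [if_neg hj, hSzero i j h hj, zero_mul]
              _ = ∑ x ∈ Finset.univ.subtype (fun j => w₀ j = 0), S i x.val * wfull x.val :=
                  hsub.symm
              _ = ∑ z : Z, S i z.val * wfull z.val := by rw [Finset.subtype_univ]
          rw [key]
          have key2 : ∑ z : Z, S i z.val * wfull z.val = ∑ z : Z, S i z.val * w' z := by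
            apply Finset.sum_congr rfl
            intro z _
            rw [hwfZ z.val z.property]
          rw [key2]
          have h3 := hw'le ⟨i, h⟩
          simp only [mulVec, dotProduct, submatrix_apply] at h3
          calc ∑ z : Z, S i z.val * w' z ≤ w' ⟨i, h⟩ := h3
            _ = wfull i := (hwfZ i h).symm
        · have key : (S *ᵥ wfull) i = (S *ᵥ w₀) i := by
            rw [mulVec, dotProduct, mulVec, dotProduct]
            apply Finset.sum_congr rfl
            intro j _
            by_cases hj : w₀ j = 0
            · rw [hwfZ j hj, hsymm i j, hSzero j i hj h, zero_mul, zero_mul]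
            · rw [hwfP j hj]
          rw [key, hSw₀]
          have : wfull i = w₀ i := hwfP i h
          rw [this]
          simp only [Pi.smul_apply, smul_eq_mul]
          nlinarith [hρ1, hw₀nn i]

theorem psd_offdiag_zero {ι : Type} [Fintype ι] [DecidableEq ι] {M : Matrix ι ι ℝ} (hM : M.PosSemidef) {i : ι}
    (hii : M i i = 0) (j : ι) : M i j = 0 := by
  rcases eq_or_ne j i with rfl | hji
  · exact hii
  · have hsym : M j i = M i j := by
      calc M j i = Mᴴ i j := by simp [conjTranspose_apply]
      _ = M i j := by rw [hM.1]
    by_contra hne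
    have key : ∀ t : ℝ, 0 ≤ 2 * t * M i j + M j j := by
      intro t
      have h2 := hM.dotProduct_mulVec_nonneg (fun k => (if k = i then t else 0) + (if k = j then 1 else 0))
      simp only [star_trivial, dotProduct, mulVec, mul_add, add_mul, mul_ite, ite_mul,
        mul_zero, zero_mul, mul_one, one_mul, Finset.sum_add_distrib,
        Finset.sum_ite_eq', Finset.mem_univ, if_pos, if_neg hji, if_neg (Ne.symm hji)] at h2
      rw [hii, hsym] at h2
      nlinarith [h2]
    have hval := key (-(M j j + 1) / (2 * M i j))
    have h2ne : (2 : ℝ) * M i j ≠ 0 := by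
      simpa using hne
    have : 2 * (-(M j j + 1) / (2 * M i j)) * M i j = -(M j j + 1) := by
      field_simp
    rw [this] at hval
    linarith

theorem sum_eq_sum_subtype {ι : Type} [Fintype ι] (p : ι → Prop) [DecidablePred p]
    (f : ι → ℝ) (hf : ∀ i, ¬ p i → f i = 0) :
    ∑ i, f i = ∑ a : {i // p i}, f a.val := by
  calc ∑ i, f i = ∑ i ∈ Finset.univ.filter p, f i := by
        rw [Finset.sum_filter]
        apply Finset.sum_congr rfl
        intro j _
        by_cases hj : p j
        · rw [if_pos hj]
        · rw [if_neg hj, hf j hj]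
    _ = ∑ x ∈ Finset.univ.subtype p, f x.val :=
        (Finset.sum_subtype_eq_sum_filter f (p := p)).symm
    _ = _ := by rw [Finset.subtype_univ]


theorem weight_lemma {ι : Type} [Fintype ι] [DecidableEq ι] (R : Matrix ι ι ℝ)
    (hpsd : R.PosSemidef) (hnn : ∀ i j, 0 ≤ R i j)
    (hpsd2 : ((2 : ℝ) • (Matrix.diagonal (fun i => R i i)) - R).PosSemidef) :
    ∃ w : ι → ℝ, (∀ i, 0 < w i) ∧ ∀ i, ∑ j, R i j * w j ≤ 2 * (R i i * w i) := by
  have hd : ∀ i, 0 ≤ R i i := fun i => psd_diag_nonneg hpsd i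
  have hsymm : ∀ a b, R a b = R b a := by
    intro a b
    calc R a b = Rᴴ b a := by simp [conjTranspose_apply]
    _ = R b a := by rw [hpsd.1]
  have hrz : ∀ i j, ¬ (0 < R i i) → R i j = 0 := by
    intro i j hi
    exact psd_offdiag_zero hpsd (le_antisymm (not_lt.mp hi) (hd i)) j
  set P := {i : ι // 0 < R i i} with hP
  have hsq : ∀ a : P, Real.sqrt (R a.val a.val) ≠ 0 := fun a =>
    ne_of_gt (Real.sqrt_pos.mpr a.property)
  have hsqnn : ∀ a : P, 0 < Real.sqrt (R a.val a.val) := fun a =>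
    Real.sqrt_pos.mpr a.property
  set S : Matrix P P ℝ := Matrix.of (fun a b =>
    R a.val b.val / (2 * Real.sqrt (R a.val a.val) * Real.sqrt (R b.val b.val))) with hS
  have hSapp : ∀ a b : P, S a b
      = R a.val b.val / (2 * Real.sqrt (R a.val a.val) * Real.sqrt (R b.val b.val)) :=
    fun a b => rfl
  have hSH : S.IsHermitian := by
    rw [Matrix.IsHermitian]
    ext a b
    simp only [conjTranspose_apply, star_trivial, hSapp]
    rw [hsymm b.val a.val]
    ring
  have hSnn : ∀ a b : P, 0 ≤ S a b := by
    intro a b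
    rw [hSapp]
    apply div_nonneg (hnn _ _)
    positivity
  have hSpsd : ((1 : Matrix P P ℝ) - S).PosSemidef := by
    refine Matrix.PosSemidef.of_dotProduct_mulVec_nonneg ?_ ?_
    · rw [Matrix.IsHermitian] at hSH ⊢
      rw [Matrix.conjTranspose_sub, hSH, Matrix.conjTranspose_one]
    · intro x
      simp only [star_trivial, Matrix.sub_mulVec, Matrix.one_mulVec, dotProduct_sub]
      -- define y
      set y : ι → ℝ := fun i => if h : 0 < R i i then x ⟨i, h⟩ / Real.sqrt (R i i) else 0
        with hy
      have hyP : ∀ a : P, y a.val = x a / Real.sqrt (R a.val a.val) := by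
        intro a
        simp only [hy, dif_pos a.property]
        rfl
      have hyz : ∀ i, ¬ (0 < R i i) → y i = 0 := by
        intro i hi
        simp only [hy, dif_neg hi]
      have hq := hpsd2.dotProduct_mulVec_nonneg y
      simp only [star_trivial, Matrix.sub_mulVec, dotProduct_sub, Matrix.smul_mulVec,
        dotProduct_smul] at hq
      -- diag part
      have hdiag : y ⬝ᵥ (Matrix.diagonal (fun i => R i i)) *ᵥ y = ∑ a : P, x a * x a := by
        rw [dotProduct]
        rw [sum_eq_sum_subtype (fun i => 0 < R i i)
          (f := fun i => y i * ((Matrix.diagonal (fun i => R i i)) *ᵥ y) i)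
          (fun i hi => by simp only [hyz i hi, zero_mul])]
        apply Finset.sum_congr rfl
        intro a _
        have hRa : R a.val a.val ≠ 0 := ne_of_gt a.property
        simp only [mulVec_diagonal, hyP a]
        rw [show x a / Real.sqrt (R a.val a.val) * (R a.val a.val * (x a / Real.sqrt (R a.val a.val)))
            = x a * x a * (R a.val a.val / (Real.sqrt (R a.val a.val) * Real.sqrt (R a.val a.val))) from by ring]
        rw [Real.mul_self_sqrt (hd a.val), div_self hRa, mul_one]
      -- cross part
      have hcross : y ⬝ᵥ R *ᵥ y
          = ∑ a : P, ∑ b : P, x a * x b * R a.val b.val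
              / (Real.sqrt (R a.val a.val) * Real.sqrt (R b.val b.val)) := by
        rw [dotProduct]
        rw [sum_eq_sum_subtype (fun i => 0 < R i i)
          (f := fun i => y i * (R *ᵥ y) i)
          (fun i hi => by simp only [hyz i hi, zero_mul])]
        apply Finset.sum_congr rfl
        intro a _
        rw [mulVec, dotProduct]
        rw [sum_eq_sum_subtype (fun i => 0 < R i i)
          (f := fun j => R a.val j * y j)
          (fun j hj => by simp only [hyz j hj, mul_zero])]
        rw [Finset.mul_sum]
        apply Finset.sum_congr rfl
        intro b _
        rw [hyP a, hyP b]
        field_simp [hsq a, hsq b]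
      -- x parts
      have hxx : x ⬝ᵥ x = ∑ a : P, x a * x a := by rw [dotProduct]
      have hxSx : x ⬝ᵥ S *ᵥ x = (1/2) * ∑ a : P, ∑ b : P, x a * x b * R a.val b.val
          / (Real.sqrt (R a.val a.val) * Real.sqrt (R b.val b.val)) := by
        rw [dotProduct, Finset.mul_sum]
        apply Finset.sum_congr rfl
        intro a _
        rw [mulVec, dotProduct, Finset.mul_sum, Finset.mul_sum]
        apply Finset.sum_congr rfl
        intro b _
        rw [hSapp]
        field_simp [hsq a, hsq b]
      rw [hxx, hxSx]
      rw [hdiag, hcross] at hq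
      simp only [smul_eq_mul] at hq
      linarith
  obtain ⟨w', hw'pos, hw'le⟩ := core_perron (Fintype.card P) P le_rfl S hSH hSnn hSpsd
  refine ⟨fun i => if h : 0 < R i i then w' ⟨i, h⟩ / Real.sqrt (R i i) else 1, ?_, ?_⟩
  · intro i
    by_cases h : 0 < R i i
    · simp only [dif_pos h]
      exact div_pos (hw'pos ⟨i, h⟩) (Real.sqrt_pos.mpr h)
    · simp only [dif_neg h]
      norm_num
  · intro i
    show (∑ j, R i j * (if hj : 0 < R j j then w' ⟨j, hj⟩ / Real.sqrt (R j j) else 1))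
        ≤ 2 * (R i i * (if hi : 0 < R i i then w' ⟨i, hi⟩ / Real.sqrt (R i i) else 1))
    by_cases h : 0 < R i i
    · set a : P := ⟨i, h⟩ with ha
      have key : ∑ j, R i j * (if hj : 0 < R j j then w' ⟨j, hj⟩ / Real.sqrt (R j j) else 1)
          = 2 * Real.sqrt (R i i) * (S *ᵥ w') a := by
        rw [mulVec, dotProduct, Finset.mul_sum]
        rw [sum_eq_sum_subtype (fun j => 0 < R j j)
          (f := fun j => R i j * (if hj : 0 < R j j then w' ⟨j, hj⟩ / Real.sqrt (R j j) else 1))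
          (fun j hj => by simp only [hsymm i j, hrz j i hj, zero_mul])]
        apply Finset.sum_congr rfl
        intro b _
        rw [dif_pos b.property, hSapp]
        have hsi : Real.sqrt (R i i) ≠ 0 := ne_of_gt (Real.sqrt_pos.mpr h)
        field_simp [hsq b]
        simp only [ha]
        field_simp
      rw [dif_pos h, key]
      have h2 : 2 * Real.sqrt (R i i) * (S *ᵥ w') a ≤ 2 * Real.sqrt (R i i) * w' a := by
        apply mul_le_mul_of_nonneg_left (hw'le a)
        positivity
      apply le_trans h2
      have hsi : Real.sqrt (R i i) ≠ 0 := ne_of_gt (Real.sqrt_pos.mpr h)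
      have heq : 2 * (R i i * (w' a / Real.sqrt (R i i))) = 2 * Real.sqrt (R i i) * w' a := by
        calc 2 * (R i i * (w' a / Real.sqrt (R i i)))
            = 2 * (R i i / Real.sqrt (R i i)) * w' a := by ring
          _ = 2 * Real.sqrt (R i i) * w' a := by rw [Real.div_sqrt]
      rw [heq]
    · rw [dif_neg h]
      have hz : ∀ j, R i j * (if hj : 0 < R j j then w' ⟨j, hj⟩ / Real.sqrt (R j j) else 1) = 0 := by
        intro j
        rw [hrz i j h, zero_mul]
      rw [Finset.sum_congr rfl (fun j _ => hz j), Finset.sum_const_zero]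
      rw [hrz i i h]
      norm_num

end AuxCP

/-- If `Φ : Mₙ(ℂ) → M₂(ℂ)` is trace-preserving and its Choi matrix is doubly
nonnegative, then its Choi matrix is completely positive. -/
theorem stmt15 (n : ℕ)
    (Φ : Matrix (Fin n) (Fin n) ℂ →ₗ[ℂ] Matrix (Fin 2) (Fin 2) ℂ)
    (hTP : IsTP Φ) (hDNN : IsDNNMat (choi Φ)) :
    IsCPMat (choi Φ) := by
  classical
  obtain ⟨hpsdC, hent⟩ := hDNN
  set ι := (Fin n × Fin 2)
  set J := choi Φ with hJ
  set R : Matrix ι ι ℝ := Matrix.of (fun a b => (J a b).re) with hR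
  have hRapp : ∀ a b, R a b = (J a b).re := fun a b => rfl
  have hJR : ∀ a b, J a b = ((R a b : ℝ) : ℂ) := by
    intro a b
    apply Complex.ext
    · simp [hRapp]
    · simp [(hent a b).2]
  have hnn : ∀ a b, 0 ≤ R a b := fun a b => (hent a b).1
  have hRsym : ∀ a b, R a b = R b a := by
    intro a b
    have h1 : J b a = star (J a b) := by
      rw [← Matrix.conjTranspose_apply, hpsdC.1]
    rw [hRapp, hRapp, h1, Complex.star_def, Complex.conj_re]
  -- real PSD
  have hqform : ∀ x : ι → ℝ, (star (fun a => ((x a : ℝ) : ℂ))) ⬝ᵥ (J *ᵥ (fun a => ((x a : ℝ) : ℂ)))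
      = ((x ⬝ᵥ R *ᵥ x : ℝ) : ℂ) := by
    intro x
    have expand : ∀ (a : ι), (J *ᵥ fun c => ((x c : ℝ) : ℂ)) a = (((R *ᵥ x) a : ℝ) : ℂ) := by
      intro a
      rw [mulVec, mulVec, dotProduct, dotProduct]
      push_cast
      apply Finset.sum_congr rfl
      intro b _
      rw [hJR a b]
    rw [dotProduct, dotProduct]
    push_cast
    apply Finset.sum_congr rfl
    intro a _
    rw [expand a]
    simp only [Pi.star_apply, Complex.star_def, Complex.conj_ofReal]
  have hRpsd : R.PosSemidef := by
    refine Matrix.PosSemidef.of_dotProduct_mulVec_nonneg ?_ ?_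
    · rw [Matrix.IsHermitian]
      ext a b
      rw [conjTranspose_apply, star_trivial, hRsym]
    · intro x
      have h := hpsdC.dotProduct_mulVec_nonneg (fun a => ((x a : ℝ) : ℂ))
      rw [hqform x] at h
      rw [star_trivial]
      exact_mod_cast h
  -- same-block off-diagonal entries vanish (from trace preservation)
  have hsame : ∀ (a b : ι), a.1 ≠ b.1 → a.2 = b.2 → R a b = 0 := by
    intro a b hne heq
    have htr := hTP (Matrix.single a.1 b.1 1)
    rw [Matrix.trace_single_eq_of_ne a.1 b.1 1 hne] at htr
    have htr2 : ∑ p : Fin 2, J (a.1, p) (b.1, p) = 0 := by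
      rw [← htr, Matrix.trace]
      apply Finset.sum_congr rfl
      intro p _
      rfl
    have htr3 : ∑ p : Fin 2, R (a.1, p) (b.1, p) = 0 := by
      have := congrArg Complex.re htr2
      simpa [Complex.re_sum, hRapp] using this
    rw [Fin.sum_univ_two] at htr3
    have h0 := hnn (a.1, (0 : Fin 2)) (b.1, 0)
    have h1 := hnn (a.1, (1 : Fin 2)) (b.1, 1)
    have hz : ∀ p : Fin 2, R (a.1, p) (b.1, p) = 0 := by
      intro p
      have : p = 0 ∨ p = 1 := by omega
      rcases this with rfl | rfl
      · linarith
      · linarith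
    have : a = (a.1, a.2) := rfl
    rw [show a = (a.1, a.2) from rfl, show b = (b.1, b.2) from rfl, ← heq]
    exact hz a.2
  -- sign-flip PSD
  have hpsd2 : ((2 : ℝ) • (Matrix.diagonal (fun a => R a a)) - R).PosSemidef := by
    refine Matrix.PosSemidef.of_dotProduct_mulVec_nonneg ?_ ?_
    · rw [Matrix.IsHermitian]
      ext a b
      simp only [conjTranspose_apply, star_trivial, Matrix.sub_apply, Matrix.smul_apply,
        smul_eq_mul]
      rw [hRsym a b]
      rcases eq_or_ne a b with rfl | hab
      · rfl
      · rw [Matrix.diagonal_apply_ne _ hab, Matrix.diagonal_apply_ne _ (Ne.symm hab)]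
    · intro x
      rw [star_trivial]
      set ε : ι → ℝ := fun a => if a.2 = 0 then 1 else -1 with hε
      have hε2 : ∀ a, ε a * ε a = 1 := by
        intro a
        by_cases h : a.2 = 0 <;> simp [hε, h]
      have hεop : ∀ a b : ι, a.2 ≠ b.2 → ε a * ε b = -1 := by
        intro a b hne
        by_cases ha : a.2 = 0
        · have hb : ¬ b.2 = 0 := fun hc => hne (ha.trans hc.symm)
          simp [hε, ha, hb]
        · have hb : b.2 = 0 := by omega
          simp [hε, ha, hb]
      have hq := hRpsd.dotProduct_mulVec_nonneg (fun a => ε a * x a)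
      rw [star_trivial] at hq
      have hkey : (fun a => ε a * x a) ⬝ᵥ R *ᵥ (fun a => ε a * x a)
          = x ⬝ᵥ ((2 : ℝ) • (Matrix.diagonal (fun a => R a a)) - R) *ᵥ x := by
        rw [dotProduct, dotProduct]
        apply Finset.sum_congr rfl
        intro a _
        rw [mulVec, mulVec, dotProduct, dotProduct, Finset.mul_sum, Finset.mul_sum]
        apply Finset.sum_congr rfl
        intro b _
        simp only [Matrix.sub_apply, Matrix.smul_apply, smul_eq_mul]
        rcases eq_or_ne a b with rfl | hab
        · rw [Matrix.diagonal_apply_eq]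
          linear_combination (R a a * x a * x a) * hε2 a
        · rw [Matrix.diagonal_apply_ne _ hab]
          rcases eq_or_ne a.2 b.2 with h2 | h2
          · have ha1 : a.1 ≠ b.1 := by
              intro hc
              exact hab (Prod.ext hc h2)
            rw [hsame a b ha1 h2]
            ring
          · linear_combination (R a b * x a * x b) * hεop a b h2
      rw [hkey] at hq
      exact hq
  -- the weight vector
  obtain ⟨w, hwpos, hwle⟩ := weight_lemma R hRpsd hnn hpsd2
  have hwne : ∀ u : ι, w u ≠ 0 := fun u => ne_of_gt (hwpos u)
  set hfun : ι → ℝ := fun u => (∑ j : Fin n, R u (j, 1 - u.2) * w (j, 1 - u.2)) / w u with hh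
  have hsum2 : ∀ (u : ι) (g : Fin 2 → ℝ), ∑ p, g p = g u.2 + g (1 - u.2) := by
    intro u g
    rw [Fin.sum_univ_two]
    have : u.2 = 0 ∨ u.2 = 1 := by omega
    rcases this with h | h <;> rw [h]
    · rw [show ((1 : Fin 2) - 0) = 1 from by decide]
    · rw [show ((1 : Fin 2) - 1) = 0 from by decide]
      exact add_comm _ _
  have hkey : ∀ u : ι, hfun u ≤ R u u := by
    intro u
    have h1 := hwle u
    have hsplit : ∑ k : ι, R u k * w k
        = (∑ i : Fin n, R u (i, u.2) * w (i, u.2))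
          + ∑ j : Fin n, R u (j, 1 - u.2) * w (j, 1 - u.2) := by
      rw [Fintype.sum_prod_type]
      rw [Finset.sum_congr rfl (fun i _ => hsum2 u (fun p => R u (i, p) * w (i, p)))]
      rw [Finset.sum_add_distrib]
    have hdiagsum : ∑ i : Fin n, R u (i, u.2) * w (i, u.2) = R u u * w u :=
      Finset.sum_eq_single u.1
        (fun i _ hne => by rw [hsame u (i, u.2) (fun hc => hne hc.symm) rfl, zero_mul])
        (fun hmem => absurd (Finset.mem_univ _) hmem)
    rw [hsplit, hdiagsum] at h1
    rw [hh]
    rw [div_le_iff₀ (hwpos u)]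
    linarith
  have hcrossnn : ∀ (u : ι) (j : Fin n), 0 ≤ R u (j, 1 - u.2) * w (j, 1 - u.2) / w u := by
    intro u j
    apply div_nonneg (mul_nonneg (hnn _ _) (le_of_lt (hwpos _))) (le_of_lt (hwpos u))
  have hfnn : ∀ u : ι, 0 ≤ hfun u := by
    intro u
    rw [hh]
    apply div_nonneg _ (le_of_lt (hwpos u))
    apply Finset.sum_nonneg
    intro j _
    exact mul_nonneg (hnn _ _) (le_of_lt (hwpos _))
  have hgnn : ∀ u : ι, 0 ≤ R u u - hfun u := fun u => sub_nonneg.mpr (hkey u)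
  -- the vectors
  set X : (Fin n × Fin n) ⊕ ι → ι → ℝ := Sum.elim
    (fun p k => if k = ((p.1, (0 : Fin 2)) : ι) then
        Real.sqrt (R (p.1, 0) (p.2, 1) * w (p.2, 1) / w (p.1, 0))
      else if k = ((p.2, (1 : Fin 2)) : ι) then
        Real.sqrt (R (p.1, 0) (p.2, 1) * w (p.1, 0) / w (p.2, 1))
      else 0)
    (fun u k => if k = u then Real.sqrt (R u u - hfun u) else 0) with hXdef
  have hXnn : ∀ τ k, 0 ≤ X τ k := by
    intro τ k
    rcases τ with p | u <;> simp only [hXdef, Sum.elim_inl, Sum.elim_inr] <;>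
      split_ifs <;> positivity
  -- evaluation lemmas
  have hX0 : ∀ (i j c1 : Fin n), X (Sum.inl (i, j)) ((c1, (0 : Fin 2)) : ι)
      = if c1 = i then Real.sqrt (R (i, 0) (j, 1) * w (j, 1) / w (i, 0)) else 0 := by
    intro i j c1
    simp only [hXdef, Sum.elim_inl]
    by_cases hc : c1 = i
    · subst hc
      rw [if_pos rfl, if_pos rfl]
    · rw [if_neg (fun hE => hc (congrArg Prod.fst hE))]
      rw [if_neg (fun hE : ((c1, (0 : Fin 2)) : ι) = ((j, (1 : Fin 2)) : ι) =>
        absurd (congrArg Prod.snd hE) Fin.zero_ne_one)]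
      rw [if_neg hc]
  have hX1 : ∀ (i j c1 : Fin n), X (Sum.inl (i, j)) ((c1, (1 : Fin 2)) : ι)
      = if c1 = j then Real.sqrt (R (i, 0) (j, 1) * w (i, 0) / w (j, 1)) else 0 := by
    intro i j c1
    simp only [hXdef, Sum.elim_inl]
    rw [if_neg (fun hE : ((c1, (1 : Fin 2)) : ι) = ((i, (0 : Fin 2)) : ι) =>
      absurd (congrArg Prod.snd hE) (Ne.symm Fin.zero_ne_one))]
    by_cases hc : c1 = j
    · subst hc
      rw [if_pos rfl, if_pos rfl]
    · rw [if_neg (fun hE => hc (congrArg Prod.fst hE)), if_neg hc]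
  -- inr sum
  have hinr : ∀ a b : ι, (∑ u : ι, X (Sum.inr u) a * X (Sum.inr u) b)
      = if a = b then R a a - hfun a else 0 := by
    intro a b
    rcases eq_or_ne a b with rfl | hne
    · rw [if_pos rfl, Finset.sum_eq_single a]
      · simp only [hXdef, Sum.elim_inr, if_pos rfl]
        exact Real.mul_self_sqrt (hgnn a)
      · intro u _ hu
        simp only [hXdef, Sum.elim_inr, if_neg (fun hc : a = u => hu hc.symm), zero_mul]
      · intro hmem
        exact absurd (Finset.mem_univ _) hmem
    · rw [if_neg hne]
      apply Finset.sum_eq_zero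
      intro u _
      by_cases hc : a = u
      · have hcb : ¬ b = u := fun hcb => hne (hc.trans hcb.symm)
        simp only [hXdef, Sum.elim_inr, if_neg hcb, mul_zero]
      · simp only [hXdef, Sum.elim_inr, if_neg hc, zero_mul]
  -- pairing algebra
  have habx : ∀ (u v : ι),
      Real.sqrt (R u v * w v / w u) * Real.sqrt (R u v * w u / w v) = R u v := by
    intro u v
    have hponn : 0 ≤ R u v * w v / w u :=
      div_nonneg (mul_nonneg (hnn u v) (hwpos v).le) (hwpos u).le
    rw [← Real.sqrt_mul hponn]
    rw [show R u v * w v / w u * (R u v * w u / w v) = (R u v) ^ 2 from by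
      field_simp [hwne u, hwne v]]
    exact Real.sqrt_sq (hnn u v)
  have hsqX : ∀ (u v : ι),
      Real.sqrt (R u v * w v / w u) * Real.sqrt (R u v * w v / w u) = R u v * w v / w u := by
    intro u v
    exact Real.mul_self_sqrt
      (div_nonneg (mul_nonneg (hnn u v) (hwpos v).le) (hwpos u).le)
  -- hfun expressed as a sum of quotients
  have hfun0 : ∀ a1 : Fin n, hfun ((a1, (0 : Fin 2)) : ι)
      = ∑ j : Fin n, R (a1, 0) (j, 1) * w (j, 1) / w (a1, 0) := by
    intro a1
    simp only [hh]
    rw [show ((1 : Fin 2) - (0:Fin 2)) = 1 from by decide]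
    rw [eq_comm, ← Finset.sum_div]
  have hfun1 : ∀ a1 : Fin n, hfun ((a1, (1 : Fin 2)) : ι)
      = ∑ i : Fin n, R (i, 0) (a1, 1) * w (i, 0) / w (a1, 1) := by
    intro a1
    simp only [hh]
    rw [show ((1 : Fin 2) - (1:Fin 2)) = 0 from by decide]
    rw [eq_comm, ← Finset.sum_div]
    apply congrArg (fun z => z / w ((a1, (1 : Fin 2)) : ι))
    apply Finset.sum_congr rfl
    intro i _
    rw [hRsym]
  -- the main identity
  have hmain : ∀ a b : ι, R a b = ∑ τ, X τ a * X τ b := by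
    intro a b
    rw [Fintype.sum_sum_type, hinr a b]
    obtain ⟨a1, a2⟩ := a
    obtain ⟨b1, b2⟩ := b
    have ha2 : a2 = 0 ∨ a2 = 1 := by omega
    have hb2 : b2 = 0 ∨ b2 = 1 := by omega
    rcases ha2 with rfl | rfl <;> rcases hb2 with rfl | rfl
    · -- (0,0)
      rcases eq_or_ne a1 b1 with rfl | hne
      · rw [if_pos rfl, Fintype.sum_prod_type]
        have hout : ∀ i : Fin n,
            (∑ j : Fin n, X (Sum.inl (i, j)) ((a1, (0:Fin 2)) : ι)
              * X (Sum.inl (i, j)) ((a1, (0:Fin 2)) : ι))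
            = if a1 = i then hfun ((a1, (0:Fin 2)) : ι) else 0 := by
          intro i
          by_cases hi : a1 = i
          · subst hi
            rw [if_pos rfl, hfun0 a1]
            apply Finset.sum_congr rfl
            intro j _
            rw [hX0, if_pos rfl]
            exact hsqX _ _
          · rw [if_neg hi]
            apply Finset.sum_eq_zero
            intro j _
            rw [hX0, if_neg hi, zero_mul]
        rw [Finset.sum_congr rfl (fun i _ => hout i), Finset.sum_ite_eq,
          if_pos (Finset.mem_univ _)]
        ring
      · rw [if_neg (fun hc => hne (congrArg Prod.fst hc))]
        rw [hsame ((a1, (0:Fin 2)) : ι) ((b1, (0:Fin 2)) : ι) hne rfl]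
        rw [Fintype.sum_prod_type, add_zero]
        symm
        apply Finset.sum_eq_zero
        intro i _
        apply Finset.sum_eq_zero
        intro j _
        rw [hX0, hX0]
        by_cases hi : a1 = i
        · rw [if_neg (show ¬ b1 = i from fun hc => hne (hi.trans hc.symm)), mul_zero]
        · rw [if_neg hi, zero_mul]
    · -- (0,1)
      rw [if_neg (fun hc : ((a1, (0:Fin 2)) : ι) = ((b1, (1:Fin 2)) : ι) =>
        absurd (congrArg Prod.snd hc) Fin.zero_ne_one)]
      rw [Fintype.sum_prod_type, add_zero]
      have hin : ∀ i : Fin n,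
          (∑ j : Fin n, X (Sum.inl (i, j)) ((a1, (0:Fin 2)) : ι)
            * X (Sum.inl (i, j)) ((b1, (1:Fin 2)) : ι))
          = if a1 = i then R ((i, (0:Fin 2)) : ι) ((b1, (1:Fin 2)) : ι) else 0 := by
        intro i
        rw [Finset.sum_eq_single b1
          (fun j _ hj => by rw [hX1, if_neg (fun hc => hj hc.symm), mul_zero])
          (fun hmem => absurd (Finset.mem_univ _) hmem)]
        rw [hX0, hX1, if_pos rfl]
        by_cases hi : a1 = i
        · rw [if_pos hi, if_pos hi]
          exact habx _ _
        · rw [if_neg hi, if_neg hi, zero_mul]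
      rw [Finset.sum_congr rfl (fun i _ => hin i), Finset.sum_ite_eq,
        if_pos (Finset.mem_univ _)]
    · -- (1,0)
      rw [if_neg (fun hc : ((a1, (1:Fin 2)) : ι) = ((b1, (0:Fin 2)) : ι) =>
        absurd (congrArg Prod.snd hc) (Ne.symm Fin.zero_ne_one))]
      rw [Fintype.sum_prod_type, add_zero]
      have hin : ∀ i : Fin n,
          (∑ j : Fin n, X (Sum.inl (i, j)) ((a1, (1:Fin 2)) : ι)
            * X (Sum.inl (i, j)) ((b1, (0:Fin 2)) : ι))
          = if b1 = i then R ((i, (0:Fin 2)) : ι) ((a1, (1:Fin 2)) : ι) else 0 := by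
        intro i
        rw [Finset.sum_eq_single a1
          (fun j _ hj => by rw [hX1, if_neg (fun hc => hj hc.symm), zero_mul])
          (fun hmem => absurd (Finset.mem_univ _) hmem)]
        rw [hX1, hX0, if_pos rfl]
        by_cases hi : b1 = i
        · rw [if_pos hi, if_pos hi, mul_comm]
          exact habx _ _
        · rw [if_neg hi, if_neg hi, mul_zero]
      rw [Finset.sum_congr rfl (fun i _ => hin i), Finset.sum_ite_eq,
        if_pos (Finset.mem_univ _)]
      exact hRsym _ _
    · -- (1,1)
      rcases eq_or_ne a1 b1 with rfl | hne
      · rw [if_pos rfl, Fintype.sum_prod_type]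
        have hin : ∀ i : Fin n,
            (∑ j : Fin n, X (Sum.inl (i, j)) ((a1, (1:Fin 2)) : ι)
              * X (Sum.inl (i, j)) ((a1, (1:Fin 2)) : ι))
            = R ((i, (0:Fin 2)) : ι) ((a1, (1:Fin 2)) : ι) * w ((i, (0:Fin 2)) : ι)
                / w ((a1, (1:Fin 2)) : ι) := by
          intro i
          rw [Finset.sum_eq_single a1
            (fun j _ hj => by rw [hX1, if_neg (fun hc => hj hc.symm), zero_mul])
            (fun hmem => absurd (Finset.mem_univ _) hmem)]
          rw [hX1, if_pos rfl]
          exact Real.mul_self_sqrt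
            (div_nonneg (mul_nonneg (hnn _ _) (hwpos _).le) (hwpos _).le)
        rw [Finset.sum_congr rfl (fun i _ => hin i), ← hfun1 a1]
        ring
      · rw [if_neg (fun hc => hne (congrArg Prod.fst hc))]
        rw [hsame ((a1, (1:Fin 2)) : ι) ((b1, (1:Fin 2)) : ι) hne rfl]
        rw [Fintype.sum_prod_type, add_zero]
        symm
        apply Finset.sum_eq_zero
        intro i _
        apply Finset.sum_eq_zero
        intro j _
        rw [hX1, hX1]
        by_cases hi : a1 = j
        · rw [if_neg (show ¬ b1 = j from fun hc => hne (hi.trans hc.symm)), mul_zero]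
        · rw [if_neg hi, zero_mul]
  -- conclude
  refine ⟨Fintype.card ((Fin n × Fin n) ⊕ ι),
    fun t => X ((Fintype.equivFin ((Fin n × Fin n) ⊕ ι)).symm t), ?_, ?_⟩
  · intro t k
    exact hXnn _ k
  · intro a b
    rw [hJR a b]
    congr 1
    rw [Equiv.sum_comp (Fintype.equivFin ((Fin n × Fin n) ⊕ ι)).symm
      (fun τ => X τ a * X τ b)]
    exact hmain a b
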